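/- Let k be a field of characteristic 0, let G be a finite connected simple graph with edge set E, and let T be a spanning tree of G. If α ∈ k^E satisfies φ_G(α) = 0 and (∂φ_G/∂x_e)(α) = 0 for every edge e ∈ T, then (∂φ_G/∂x_e)(α) = 0 for every edge e ∈ E; in other words, the singular locus Sing(Z_G) is already cut out by φ_G together with the n_G partial derivatives along the edges of any spanning tree. -/

import Mathlib

open MvPolynomial

variable {V : Type}

/-- `T ⊆ E(G)` is a spanning tree of `G`: a set of `n_G = |V| - 1` edges such that the
subgraph `(V, T)` is connected. -/
def SimpleGraph.IsSpanningTree [Fintype V] (G : SimpleGraph V) (T : Finset G.edgeSet) : Prop :=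
  T.card = Fintype.card V - 1 ∧
    (SimpleGraph.fromEdgeSet (Subtype.val '' (T : Set G.edgeSet))).Connected

-- The dual graph polynomial `φ_G = Σ_T Π_{e ∈ T} x_e`, summed over all spanning trees.
open scoped Classical in
noncomputable def dualPoly [Fintype V] (R : Type) [CommRing R] (G : SimpleGraph V)
    [Fintype G.edgeSet] : MvPolynomial G.edgeSet R :=
  ∑ T ∈ Finset.univ.filter (fun T : Finset G.edgeSet => G.IsSpanningTree T), ∏ e ∈ T, X e

namespace SLCaux

open Matrix Finset

set_option linter.unusedSectionVars false

lemma pderiv_finset_prod {σ K ι : Type} [CommRing K] [DecidableEq σ] [DecidableEq ι] (e : σ) (s : Finset ι)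
    (f : ι → MvPolynomial σ K) :
    pderiv e (∏ i ∈ s, f i) = ∑ i ∈ s, pderiv e (f i) * ∏ j ∈ s.erase i, f j := by
  induction s using Finset.induction_on with
  | empty => simp
  | @insert a s ha ih =>
    rw [Finset.prod_insert ha, pderiv_mul, ih, Finset.sum_insert ha, Finset.erase_insert ha,
      Finset.mul_sum]
    congr 1
    refine Finset.sum_congr rfl fun i hi => ?_
    rw [Finset.erase_insert_of_ne (by rintro rfl; exact ha hi),
      Finset.prod_insert (fun h => ha (Finset.mem_of_mem_erase h))]
    ring

lemma pderiv_det {σ K : Type} [CommRing K] [DecidableEq σ] {n : Type} [Fintype n] [DecidableEq n]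
    (e : σ) (M : Matrix n n (MvPolynomial σ K)) :
    pderiv e M.det = ∑ i, (M.updateCol i fun r => pderiv e (M r i)).det := by
  rw [det_apply, map_sum]
  have step : ∀ τ : Equiv.Perm n, pderiv e (Equiv.Perm.sign τ • ∏ i, M (τ i) i)
      = ∑ i, Equiv.Perm.sign τ • (pderiv e (M (τ i) i) * ∏ j ∈ univ.erase i, M (τ j) j) := by
    intro τ
    rw [Units.smul_def, map_zsmul, pderiv_finset_prod, Finset.smul_sum]
    simp [Units.smul_def]
  rw [Finset.sum_congr rfl fun τ _ => step τ, Finset.sum_comm]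
  refine Finset.sum_congr rfl fun i _ => ?_
  rw [det_apply]
  refine Finset.sum_congr rfl fun τ _ => ?_
  congr 1
  rw [← Finset.mul_prod_erase univ _ (Finset.mem_univ i)]
  congr 1
  · simp [Matrix.updateCol_apply]
  · refine Finset.prod_congr rfl fun j hj => ?_
    rw [Matrix.updateCol_apply, if_neg (Finset.ne_of_mem_erase hj)]

variable [Fintype V] [DecidableEq V] (G : SimpleGraph V) [Fintype G.edgeSet] (v0 : V)

noncomputable def vint (e : G.edgeSet) (w : {x : V // x ≠ v0}) : ℤ :=
  (if w.1 = (Quot.out (e : Sym2 V)).1 then 1 else 0)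
    - (if w.1 = (Quot.out (e : Sym2 V)).2 then 1 else 0)

noncomputable def vcast (K : Type) [CommRing K] (e : G.edgeSet) (w : {x : V // x ≠ v0}) : K :=
  ((vint G v0 e w : ℤ) : K)

/-- Restricted indicator vector of a vertex. -/
def ind (K : Type) [CommRing K] (a : V) (w : {x : V // x ≠ v0}) : K :=
  if w.1 = a then 1 else 0

lemma vcast_eq (K : Type) [CommRing K] (e : G.edgeSet) :
    vcast G v0 K e = fun w => ind (v0 := v0) K (Quot.out (e : Sym2 V)).1 w
      - ind (v0 := v0) K (Quot.out (e : Sym2 V)).2 w := by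
  funext w
  simp [vcast, vint, ind, apply_ite (Int.cast : ℤ → K)]

lemma vcast_of_eq (K : Type) [CommRing K] {e : G.edgeSet} {a c : V} (h : (e : Sym2 V) = s(a, c)) :
    vcast G v0 K e = (fun w => ind (v0 := v0) K a w - ind (v0 := v0) K c w)
    ∨ vcast G v0 K e = (fun w => ind (v0 := v0) K c w - ind (v0 := v0) K a w) := by
  have hmk : s((Quot.out (e : Sym2 V)).1, (Quot.out (e : Sym2 V)).2) = s((a, c).1, (a, c).2) := by
    show _ = s(a, c)
    rw [← h]; exact Quot.out_eq _
  rcases (Sym2.mk_eq_mk_iff (p := Quot.out (e : Sym2 V)) (q := (a, c))).1 hmk with h' | h'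
  · left; rw [vcast_eq, h']
  · right; rw [vcast_eq, h']; rfl

lemma ind_sub_mem_span (K : Type) [CommRing K] (S : Finset G.edgeSet) {a b : V}
    (p : (SimpleGraph.fromEdgeSet (Subtype.val '' (S : Set G.edgeSet))).Walk a b) :
    (fun w => ind (v0 := v0) K a w - ind (v0 := v0) K b w) ∈
      Submodule.span K (Set.range fun f : S => vcast G v0 K f.1) := by
  induction p with
  | nil =>
    simp only [sub_self]
    exact Submodule.zero_mem _
  | @cons u v w h q ih =>
    obtain ⟨hm, hne⟩ := (SimpleGraph.fromEdgeSet_adj _).1 h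
    obtain ⟨f, hfS, hf⟩ := hm
    have hf' : (f : Sym2 V) = s(u, v) := hf
    have hfS' : f ∈ S := hfS
    have hmem : (fun w' => ind (v0 := v0) K u w' - ind (v0 := v0) K v w') ∈
        Submodule.span K (Set.range fun f : S => vcast G v0 K f.1) := by
      rcases vcast_of_eq G v0 K hf' with h' | h'
      · rw [← h']; exact Submodule.subset_span ⟨⟨f, hfS'⟩, rfl⟩
      · have : (fun w' => ind (v0 := v0) K u w' - ind (v0 := v0) K v w')
            = -vcast G v0 K f := by rw [h']; funext w'; simp
        rw [this]; exact Submodule.neg_mem _ (Submodule.subset_span ⟨⟨f, hfS'⟩, rfl⟩)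
    have hsplit : (fun w' => ind (v0 := v0) K u w' - ind (v0 := v0) K w w')
        = (fun w' => ind (v0 := v0) K u w' - ind (v0 := v0) K v w')
          + fun w' => ind (v0 := v0) K v w' - ind (v0 := v0) K w w' := by
      funext w'; simp
    rw [hsplit]; exact Submodule.add_mem _ hmem ih

lemma span_eq_top (K : Type) [CommRing K] (S : Finset G.edgeSet)
    (hconn : (SimpleGraph.fromEdgeSet (Subtype.val '' (S : Set G.edgeSet))).Connected) :
    Submodule.span K (Set.range fun f : S => vcast G v0 K f.1) = ⊤ := by
  have hsingle : ∀ w : {x : V // x ≠ v0}, (Pi.single w 1 : {x : V // x ≠ v0} → K) ∈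
      Submodule.span K (Set.range fun f : S => vcast G v0 K f.1) := by
    intro w
    obtain ⟨p⟩ := hconn.preconnected w.1 v0
    have := ind_sub_mem_span G v0 K S p
    have heq : (fun w' => ind (v0 := v0) K w.1 w' - ind (v0 := v0) K v0 w')
        = (Pi.single w 1 : {x : V // x ≠ v0} → K) := by
      funext w'
      simp only [ind, Pi.single_apply]
      rw [if_neg w'.2, sub_zero]
      by_cases h : w' = w
      · subst h; simp
      · rw [if_neg (fun hh => h (Subtype.ext hh)), if_neg h]
    rwa [heq] at this
  rw [eq_top_iff, ← (Pi.basisFun K {x : V // x ≠ v0}).span_eq]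
  refine Submodule.span_le.2 ?_
  rintro x ⟨w, rfl⟩
  simpa [Pi.basisFun_apply] using hsingle w

lemma vcast_int (e : G.edgeSet) : vcast G v0 ℤ e = vint G v0 e := by
  funext w; simp [vcast]

lemma det_sq_eq_one (S : Finset G.edgeSet)
    (hconn : (SimpleGraph.fromEdgeSet (Subtype.val '' (S : Set G.edgeSet))).Connected)
    (σ' : {x : V // x ≠ v0} → G.edgeSet) (hsurj : ∀ f ∈ S, ∃ i, σ' i = f) :
    (Matrix.of fun i j : {x : V // x ≠ v0} => vint G v0 (σ' i) j).det ^ 2 = 1 := by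
  set Cz : Matrix {x : V // x ≠ v0} {x : V // x ≠ v0} ℤ :=
    Matrix.of fun i j => vint G v0 (σ' i) j with hCz
  have hsp : Submodule.span ℤ (Set.range fun i : {x : V // x ≠ v0} => vint G v0 (σ' i)) = ⊤ := by
    rw [eq_top_iff, ← span_eq_top G v0 ℤ S hconn]
    refine Submodule.span_le.2 ?_
    rintro x ⟨f, rfl⟩
    obtain ⟨i, hi⟩ := hsurj f.1 f.2
    exact Submodule.subset_span ⟨i, by
      show vint G v0 (σ' i) = vcast G v0 ℤ ↑f
      rw [hi, vcast_int]⟩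
  have hrange : LinearMap.range (Czᵀ.mulVecLin) = ⊤ := by
    rw [Matrix.range_mulVecLin]
    exact hsp
  have hex : ∀ b : {x : V // x ≠ v0}, ∃ x, Czᵀ *ᵥ x = Pi.single b 1 := by
    intro b
    obtain ⟨x, hx⟩ := LinearMap.range_eq_top.1 hrange (Pi.single b 1)
    exact ⟨x, hx⟩
  choose g hg using hex
  set Q : Matrix {x : V // x ≠ v0} {x : V // x ≠ v0} ℤ := Matrix.of fun c b => g b c with hQ
  have hmul : Czᵀ * Q = 1 := by
    ext a b
    have := congrFun (hg b) a
    simp only [Matrix.mulVec, dotProduct] at this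
    rw [Matrix.mul_apply, Matrix.one_apply]
    simp only [hQ, Matrix.of_apply]
    rw [this, Pi.single_apply]
  have hunit : IsUnit Cz.det := by
    have h2 := congrArg Matrix.det hmul
    rw [Matrix.det_mul, Matrix.det_one, Matrix.det_transpose] at h2
    exact IsUnit.of_mul_eq_one _ h2
  exact Int.isUnit_sq hunit

lemma det_eq_zero_of_not_connected (S : Finset G.edgeSet)
    (hnc : ¬ (SimpleGraph.fromEdgeSet (Subtype.val '' (S : Set G.edgeSet))).Connected)
    (σ' : {x : V // x ≠ v0} → G.edgeSet) (hmem : ∀ i, σ' i ∈ S) :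
    (Matrix.of fun i j : {x : V // x ≠ v0} => vint G v0 (σ' i) j).det = 0 := by
  classical
  set H := SimpleGraph.fromEdgeSet (Subtype.val '' (S : Set G.edgeSet)) with hH
  obtain ⟨a0, ha0⟩ : ∃ a, ¬ H.Reachable v0 a := by
    by_contra hall
    push_neg at hall
    haveI : Nonempty V := ⟨v0⟩
    exact hnc ⟨fun x y => (hall x).symm.trans (hall y)⟩
  have ha0v : a0 ≠ v0 := fun h => ha0 (h ▸ SimpleGraph.Reachable.refl _)
  rw [← Matrix.exists_mulVec_eq_zero_iff]
  refine ⟨fun j => if H.Reachable a0 j.1 then 1 else 0, ?_, ?_⟩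
  · intro h0
    have := congrFun h0 ⟨a0, ha0v⟩
    simp at this
  · have key : ∀ c : V,
        (∑ j : {x : V // x ≠ v0}, (if (j : V) = c then (1:ℤ) else 0)
          * (if H.Reachable a0 j.1 then 1 else 0))
        = if H.Reachable a0 c then 1 else 0 := by
      intro c
      by_cases hc : c = v0
      · subst hc
        rw [Finset.sum_eq_zero, if_neg (fun h => ha0 h.symm)]
        intro j _
        rw [if_neg j.2, zero_mul]
      · rw [Finset.sum_eq_single ⟨c, hc⟩]
        · simp
        · intro j _ hj
          rw [if_neg (fun h => hj (Subtype.ext h)), zero_mul]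
        · intro h; exact absurd (Finset.mem_univ _) h
    funext i
    set f := σ' i with hf
    set a := (Quot.out (f : Sym2 V)).1 with hao
    set b := (Quot.out (f : Sym2 V)).2 with hbo
    have hmk : s(a, b) = (f : Sym2 V) := Quot.out_eq _
    have hadj : H.Adj a b := by
      rw [hH, SimpleGraph.fromEdgeSet_adj]
      constructor
      · exact ⟨f, hmem i, hmk.symm⟩
      · intro hab
        exact G.not_isDiag_of_mem_edgeSet f.2 (hmk ▸ (Sym2.mk_isDiag_iff.2 hab : Sym2.IsDiag s(a,b)))
    have hiff : H.Reachable a0 a ↔ H.Reachable a0 b :=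
      ⟨fun h => h.trans hadj.reachable, fun h => h.trans hadj.symm.reachable⟩
    show (∑ j, Matrix.of (fun i j : {x : V // x ≠ v0} => vint G v0 (σ' i) j) i j
        * (if H.Reachable a0 j.1 then 1 else 0)) = (0 : {x : V // x ≠ v0} → ℤ) i
    simp only [Matrix.of_apply, vint, ← hf, ← hao, ← hbo, sub_mul, Pi.zero_apply]
    rw [Finset.sum_sub_distrib, key a, key b]
    by_cases hra : H.Reachable a0 a
    · rw [if_pos hra, if_pos (hiff.1 hra), sub_self]
    · rw [if_neg hra, if_neg (fun h => hra (hiff.2 h)), sub_self]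

lemma det_eq_dualPoly (K : Type) [CommRing K] [DecidableEq G.edgeSet]
    (hc : Fintype.card {x : V // x ≠ v0} = Fintype.card V - 1) :
    (Matrix.of fun i j : {x : V // x ≠ v0} =>
        ∑ e : G.edgeSet, X e * vcast G v0 (MvPolynomial G.edgeSet K) e i
          * vcast G v0 (MvPolynomial G.edgeSet K) e j).det = dualPoly K G := by
  classical
  set R : Type := MvPolynomial G.edgeSet K with hR
  set vR : G.edgeSet → {x : V // x ≠ v0} → R := vcast G v0 R with hvR
  set M : Matrix {x : V // x ≠ v0} {x : V // x ≠ v0} R :=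
    Matrix.of fun i j => ∑ e : G.edgeSet, X e * vR e i * vR e j with hM
  set n := Fintype.card {x : V // x ≠ v0} with hn
  set F : ({x : V // x ≠ v0} → G.edgeSet) → R :=
    fun p => (∏ i, (X (p i) * vR (p i) i)) * (Matrix.of fun i j => vR (p i) j).det with hF
  -- Step 1: multilinear expansion
  have h1 : M.det = ∑ p : {x : V // x ≠ v0} → G.edgeSet, F p := by
    have e1 : M.det = (Matrix.detRowAlternating
        (R := R) (n := {x : V // x ≠ v0})).toMultilinearMap
          (fun i => ∑ e : G.edgeSet, (X e * vR e i) • vR e) := by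
      have hrows : (M : Matrix {x : V // x ≠ v0} {x : V // x ≠ v0} R)
          = fun i => ∑ e : G.edgeSet, (X e * vR e i) • vR e := by
        funext i j
        simp only [hM, Matrix.of_apply, Finset.sum_apply, Pi.smul_apply, smul_eq_mul,
          mul_assoc]
      rw [hrows]
      rfl
    rw [e1, MultilinearMap.map_sum]
    refine Finset.sum_congr rfl fun p _ => ?_
    rw [MultilinearMap.map_smul_univ]
    rfl
  -- Step 2: non-injective terms vanish
  have h2 : ∀ p : {x : V // x ≠ v0} → G.edgeSet, ¬ Function.Injective p →
      (Matrix.of fun i j => vR (p i) j).det = 0 := by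
    intro p hp
    simp only [Function.Injective] at hp; push_neg at hp
    obtain ⟨i, j, hij, hne⟩ := hp
    exact Matrix.det_zero_of_row_eq hne (by funext c; simp [hij])
  have h3 : M.det = ∑ p ∈ univ.filter
      (fun p : {x : V // x ≠ v0} → G.edgeSet => Function.Injective p), F p := by
    rw [h1]
    refine (Finset.sum_filter_of_ne ?_).symm
    intro p _ hne
    by_contra hni
    exact hne (by rw [hF]; simp only []; rw [h2 p hni, mul_zero])
  have h4 : M.det = ∑ S ∈ univ.filter (fun S : Finset G.edgeSet => S.card = n),
      ∑ p ∈ (univ.filter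
        (fun p : {x : V // x ≠ v0} → G.edgeSet => Function.Injective p)).filter
          (fun p => univ.image p = S), F p := by
    rw [h3]
    refine (Finset.sum_fiberwise_of_maps_to ?_ F).symm
    intro p hp
    rw [Finset.mem_filter]
    refine ⟨Finset.mem_univ _, ?_⟩
    rw [Finset.card_image_of_injective _ (Finset.mem_filter.1 hp).2, Finset.card_univ]
  -- Step 3: fiber computation
  have hfiber : ∀ S : Finset G.edgeSet, S.card = n →
      (∑ p ∈ (univ.filter
        (fun p : {x : V // x ≠ v0} → G.edgeSet => Function.Injective p)).filter
          (fun p => univ.image p = S), F p)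
      = if (SimpleGraph.fromEdgeSet (Subtype.val '' (S : Set G.edgeSet))).Connected
          then ∏ e ∈ S, X e else 0 := by
    intro S hS
    have hcard' : Fintype.card {x // x ∈ S} = Fintype.card {x : V // x ≠ v0} := by
      rw [Fintype.card_coe, hS]
    set σ0 : {x : V // x ≠ v0} ≃ {x // x ∈ S} := (Fintype.equivOfCardEq hcard').symm with hσ0
    set σ' : {x : V // x ≠ v0} → G.edgeSet := fun i => (σ0 i).1 with hσ'
    have hσmem : ∀ i, σ' i ∈ S := fun i => (σ0 i).2
    have hσinj : Function.Injective σ' := fun i j h => σ0.injective (Subtype.ext h)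
    have hσsurj : ∀ f ∈ S, ∃ i, σ' i = f := fun f hf =>
      ⟨σ0.symm ⟨f, hf⟩, by simp [hσ']⟩
    set Cz : Matrix {x : V // x ≠ v0} {x : V // x ≠ v0} ℤ :=
      Matrix.of fun i j => vint G v0 (σ' i) j with hCzdef
    set CR : Matrix {x : V // x ≠ v0} {x : V // x ≠ v0} R :=
      Matrix.of fun i j => vR (σ' i) j with hCRdef
    have hbij : (∑ p ∈ (univ.filter
        (fun p : {x : V // x ≠ v0} → G.edgeSet => Function.Injective p)).filter
          (fun p => univ.image p = S), F p)
        = ∑ π : Equiv.Perm {x : V // x ≠ v0}, F ((fun i => σ' (π i))) := by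
      refine (Finset.sum_bij (fun (π : Equiv.Perm {x : V // x ≠ v0}) (_ : π ∈ Finset.univ) => (fun i => σ' (π i))) ?_ ?_ ?_ ?_).symm
      · intro π _
        rw [Finset.mem_filter, Finset.mem_filter]
        refine ⟨⟨Finset.mem_univ _, hσinj.comp π.injective⟩, ?_⟩
        ext f
        simp only [Finset.mem_image, Finset.mem_univ, true_and, Function.comp_apply]
        constructor
        · rintro ⟨i, rfl⟩; exact hσmem _
        · intro hf
          obtain ⟨i, hi⟩ := hσsurj f hf
          exact ⟨π.symm i, by simp [hi]⟩
      · intro π _ π' _ h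
        ext i : 1
        exact hσinj (congrFun h i)
      · intro p hp
        rw [Finset.mem_filter, Finset.mem_filter] at hp
        obtain ⟨⟨-, hpinj⟩, himg⟩ := hp
        have hmem : ∀ i, p i ∈ S := by
          intro i; rw [← himg]; exact Finset.mem_image_of_mem p (Finset.mem_univ i)
        have hinj2 : Function.Injective (fun i => σ0.symm ⟨p i, hmem i⟩) := by
          intro i j h
          exact hpinj (congrArg Subtype.val (σ0.symm.injective h))
        refine ⟨Equiv.ofBijective _ ((Finite.injective_iff_bijective).1 hinj2),
          Finset.mem_univ _, ?_⟩
        funext i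
        show σ' (σ0.symm ⟨p i, hmem i⟩) = p i
        simp [hσ']
      · intro π _; rfl
    have himgσ : Finset.image σ' univ = S := by
      ext f
      simp only [Finset.mem_image, Finset.mem_univ, true_and]
      exact ⟨fun ⟨i, hi⟩ => hi ▸ hσmem i, fun hf => hσsurj f hf⟩
    have hFπ : ∀ π : Equiv.Perm {x : V // x ≠ v0}, F ((fun i => σ' (π i)))
        = (∏ e ∈ S, X e) * ((Equiv.Perm.sign π • ∏ i, CR (π i) i) * CR.det) := by
      intro π
      have hprodX : (∏ i, X (σ' (π i)) : R) = ∏ e ∈ S, X e := by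
        rw [Equiv.prod_comp π (fun i => (X (σ' i) : R)), ← himgσ,
          Finset.prod_image (fun i _ j _ h => hσinj h)]
      have hprod : (∏ i, (X (((fun i => σ' (π i))) i) * vR (((fun i => σ' (π i))) i) i))
          = (∏ e ∈ S, X e) * ∏ i, CR (π i) i := by
        rw [Finset.prod_mul_distrib, hprodX]
        rfl
      have hdet : (Matrix.of fun i j => vR (((fun i => σ' (π i))) i) j).det
          = Equiv.Perm.sign π • CR.det := by
        have : (Matrix.of fun i j => vR (((fun i => σ' (π i))) i) j) = CR.submatrix π id := by
          ext i j
          simp [hCRdef, Matrix.submatrix_apply]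
        rw [this, Matrix.det_permute]
        simp [Units.smul_def, zsmul_eq_mul]
      rw [hF]
      simp only []
      rw [hprod, hdet, mul_assoc]
      congr 1
      rw [smul_mul_assoc, mul_smul_comm]
    rw [hbij, Finset.sum_congr rfl (fun π _ => hFπ π), ← Finset.mul_sum]
    have hsum : (∑ π : Equiv.Perm {x : V // x ≠ v0},
        (Equiv.Perm.sign π • ∏ i, CR (π i) i) * CR.det)
        = CR.det * CR.det := by
      rw [← Finset.sum_mul, ← Matrix.det_apply]
    rw [hsum]
    have hCR : CR.det = ((Cz.det : ℤ) : R) := by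
      have hmap : CR = Cz.map (Int.cast : ℤ → R) := by
        ext i j
        simp [hCRdef, hCzdef, hvR, vcast]
      rw [hmap]
      exact (RingHom.map_det (Int.castRingHom R) Cz).symm
    by_cases hcn : (SimpleGraph.fromEdgeSet (Subtype.val '' (S : Set G.edgeSet))).Connected
    · rw [if_pos hcn, hCR, ← Int.cast_mul, ← sq,
        det_sq_eq_one G v0 S hcn σ' hσsurj, Int.cast_one, mul_one]
    · rw [if_neg hcn, hCR, det_eq_zero_of_not_connected G v0 S hcn σ' hσmem,
        Int.cast_zero, mul_zero, mul_zero]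
  -- Step 4: assemble
  rw [h4, Finset.sum_congr rfl (fun S hS => hfiber S (Finset.mem_filter.1 hS).2),
    ← Finset.sum_filter, dualPoly]
  refine Finset.sum_congr ?_ (fun _ _ => rfl)
  ext S
  simp only [Finset.mem_filter, Finset.mem_univ, true_and]
  constructor
  · rintro ⟨hS1, hS2⟩
    rw [hc] at hS1
    exact ⟨hS1, hS2⟩
  · rintro ⟨hS1, hS2⟩
    rw [← hc] at hS1
    exact ⟨hS1, hS2⟩

end SLCaux

open SLCaux Matrix Finset in
theorem singular_locus_cut_by_spanning_tree (k : Type) [Field k] [CharZero k]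
    [Fintype V] (G : SimpleGraph V) [Fintype G.edgeSet] (hG : G.Connected)
    (T : Finset G.edgeSet) (hT : G.IsSpanningTree T) (α : G.edgeSet → k)
    (h0 : eval α (dualPoly k G) = 0)
    (hTd : ∀ e ∈ T, eval α (pderiv e (dualPoly k G)) = 0) :
    ∀ e : G.edgeSet, eval α (pderiv e (dualPoly k G)) = 0 := by
  classical
  obtain ⟨v0⟩ := hG.nonempty
  have hc : Fintype.card {x : V // x ≠ v0} = Fintype.card V - 1 := by
    have h1 : Fintype.card {x : V // ¬ (x = v0)} = Fintype.card V - Fintype.card {x : V // x = v0} :=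
      Fintype.card_subtype_compl _
    rw [Fintype.card_subtype_eq] at h1
    exact h1
  set R : Type := MvPolynomial G.edgeSet k with hR
  set vR : G.edgeSet → {x : V // x ≠ v0} → R := vcast G v0 R with hvR
  set vk : G.edgeSet → {x : V // x ≠ v0} → k := vcast G v0 k with hvk
  set M : Matrix {x : V // x ≠ v0} {x : V // x ≠ v0} R :=
    Matrix.of fun i j => ∑ e : G.edgeSet, X e * vR e i * vR e j with hM
  have hdet : M.det = dualPoly k G := det_eq_dualPoly G v0 k hc
  set N : Matrix {x : V // x ≠ v0} {x : V // x ≠ v0} k :=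
    Matrix.of fun i j => ∑ e : G.edgeSet, α e * vk e i * vk e j with hN
  have hmapN : M.map (eval α) = N := by
    ext i j
    simp [hM, hN, hvR, hvk, vcast]
  have hNdet : N.det = 0 := by
    have h1 := RingHom.map_det (eval α) M
    rw [hdet, h0, RingHom.mapMatrix_apply, hmapN] at h1
    exact h1.symm
  set A := N.adjugate with hAdef
  -- derivative formula
  have hMder : ∀ (e : G.edgeSet) (r i : {x : V // x ≠ v0}),
      pderiv e (M r i) = vR e r * vR e i := by
    intro e r i
    have hconst : ∀ (f : G.edgeSet) (w : {x : V // x ≠ v0}), pderiv e (vR f w) = 0 := by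
      intro f w
      rw [hvR, vcast, ← map_intCast (C : k →+* MvPolynomial G.edgeSet k) (vint G v0 f w)]
      exact pderiv_C
    show pderiv e (∑ f : G.edgeSet, X f * vR f r * vR f i) = _
    rw [map_sum, Finset.sum_eq_single e]
    · rw [pderiv_mul, pderiv_mul, hconst, hconst, pderiv_X_self]
      ring
    · intro f _ hfe
      rw [pderiv_mul, pderiv_mul, hconst, hconst, pderiv_X_of_ne hfe]
      ring
    · intro h; exact absurd (Finset.mem_univ _) h
  have hder : ∀ e : G.edgeSet, eval α (pderiv e (dualPoly k G)) = vk e ⬝ᵥ (A *ᵥ vk e) := by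
    intro e
    rw [← hdet, pderiv_det, map_sum]
    have hterm : ∀ i, eval α (M.updateCol i fun r => pderiv e (M r i)).det
        = vk e i * (N.updateCol i (vk e)).det := by
      intro i
      rw [RingHom.map_det, RingHom.mapMatrix_apply, Matrix.map_updateCol, hmapN]
      have hevalv : ∀ (f : G.edgeSet) (w : {x : V // x ≠ v0}), (eval α) (vR f w) = vk f w := by
        intro f w
        simp only [hvR, hvk, vcast, map_intCast]
      have hcol : ((eval α) ∘ fun r => pderiv e (M r i)) = (vk e i) • vk e := by
        funext r
        simp only [Function.comp_apply, hMder, _root_.map_mul, Pi.smul_apply, smul_eq_mul]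
        rw [hevalv, hevalv]
        ring
      rw [hcol, Matrix.det_updateCol_smul]
    rw [Finset.sum_congr rfl fun i _ => hterm i]
    have hdot : (∑ i, vk e i * (N.updateCol i (vk e)).det) = vk e ⬝ᵥ (N.cramer (vk e)) := by
      simp [dotProduct, Matrix.cramer_apply]
    rw [hdot, Matrix.cramer_eq_adjugate_mulVec]
  -- adjugate facts
  have hNA : N * A = 0 := by rw [hAdef, Matrix.mul_adjugate, hNdet, zero_smul]
  have hAsym : ∀ p q, A p q = A q p := by
    have hNs : Nᵀ = N := by
      ext i j
      simp only [Matrix.transpose_apply, hN, Matrix.of_apply]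
      exact Finset.sum_congr rfl fun e _ => by ring
    intro p q
    have h1 : Aᵀ = A := by rw [hAdef, Matrix.adjugate_transpose, hNs]
    exact (congrFun (congrFun h1 q) p).symm ▸ rfl
  by_cases hA0 : A = 0
  · intro e
    rw [hder e, hA0, Matrix.zero_mulVec, dotProduct_zero]
  · exfalso
    have hex : ∃ i j, A i j ≠ 0 := by
      by_contra hno
      push_neg at hno
      exact hA0 (by ext i j; exact hno i j)
    obtain ⟨i, j, hij⟩ := hex
    -- kernel rigidity
    have hker : ∀ z : {x : V // x ≠ v0} → k, N *ᵥ z = 0 → z i = 0 → z = 0 := by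
      intro z hz hzi
      set P := N.updateRow j (Pi.single i 1) with hP
      have hdetP : P.det ≠ 0 := by
        rw [hP, ← Matrix.adjugate_apply]
        exact hij
      have hPz : P *ᵥ z = 0 := by
        funext r
        by_cases hr : r = j
        · show P r ⬝ᵥ z = 0
          rw [hP, hr, Matrix.updateRow_self, single_dotProduct, hzi, one_mul]
        · show P r ⬝ᵥ z = 0
          rw [hP, Matrix.updateRow_ne hr]
          exact congrFun hz r
      have hPU : IsUnit P.det := isUnit_iff_ne_zero.2 hdetP
      calc z = (P⁻¹ * P) *ᵥ z := by rw [Matrix.nonsing_inv_mul P hPU, Matrix.one_mulVec]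
        _ = P⁻¹ *ᵥ (P *ᵥ z) := (Matrix.mulVec_mulVec _ _ _).symm
        _ = 0 := by rw [hPz, Matrix.mulVec_zero]
    have hcolker : ∀ q, N *ᵥ (fun p => A p q) = 0 := by
      intro q
      funext r
      have h1 := congrFun (congrFun hNA r) q
      simpa [Matrix.mul_apply, Matrix.mulVec, dotProduct] using h1
    have hrk : ∀ p q, A i j * A p q = A i q * A p j := by
      intro p q
      have hzker : N *ᵥ (A i j • (fun r => A r q) - A i q • (fun r => A r j)) = 0 := by
        have h1 : N *ᵥ (A i j • (fun r => A r q) - A i q • (fun r => A r j))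
            = N.mulVecLin (A i j • (fun r => A r q) - A i q • (fun r => A r j)) := rfl
        rw [h1, map_sub, _root_.map_smul, _root_.map_smul]
        show A i j • (N *ᵥ fun r => A r q) - A i q • (N *ᵥ fun r => A r j) = 0
        rw [hcolker q, hcolker j, smul_zero, smul_zero, sub_zero]
      have hzi : (A i j • (fun r => A r q) - A i q • (fun r => A r j)) i = 0 := by
        simp only [Pi.sub_apply, Pi.smul_apply, smul_eq_mul]
        ring
      have hz0 := hker _ hzker hzi
      have h2 := congrFun hz0 p
      simp only [Pi.sub_apply, Pi.smul_apply, smul_eq_mul, Pi.zero_apply, sub_eq_zero] at h2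
      exact h2
    -- the two linear functionals
    set ψ : ({x : V // x ≠ v0} → k) →ₗ[k] k :=
      (LinearMap.proj j).comp (Matrix.vecMulLinear A) with hψdef
    have hψ : ∀ u, ψ u = ∑ p, u p * A p j := by
      intro u
      show (u ᵥ* A) j = _
      rfl
    set χ : ({x : V // x ≠ v0} → k) → k := fun w => ∑ q, A i q * w q with hχdef
    have hB : ∀ u w, A i j * (u ⬝ᵥ (A *ᵥ w)) = ψ u * χ w := by
      intro u w
      have e1 : u ⬝ᵥ (A *ᵥ w) = ∑ p, ∑ q, u p * A p q * w q := by
        simp only [dotProduct, Matrix.mulVec, Finset.mul_sum]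
        exact Finset.sum_congr rfl fun p _ => Finset.sum_congr rfl fun q _ => by ring
      rw [e1, Finset.mul_sum, hψ, hχdef]
      rw [Finset.sum_mul_sum]
      refine Finset.sum_congr rfl fun p _ => ?_
      rw [Finset.mul_sum]
      refine Finset.sum_congr rfl fun q _ => ?_
      have := hrk p q
      calc A i j * (u p * A p q * w q) = (A i j * A p q) * (u p * w q) := by ring
        _ = (A i q * A p j) * (u p * w q) := by rw [this]
        _ = u p * A p j * (A i q * w q) := by ring
    have hsym : ∀ u w, (u ⬝ᵥ (A *ᵥ w)) = (w ⬝ᵥ (A *ᵥ u)) := by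
      intro u w
      simp only [dotProduct, Matrix.mulVec, Finset.mul_sum]
      rw [Finset.sum_comm]
      exact Finset.sum_congr rfl fun q _ => Finset.sum_congr rfl fun p _ => by
        rw [hAsym p q]; ring
    have hprop : ∀ u w, ψ u * χ w = ψ w * χ u := by
      intro u w
      rw [← hB u w, ← hB w u, hsym u w]
    have hψsingle : ψ (Pi.single i 1) = A i j := by
      rw [hψ, Finset.sum_eq_single i]
      · simp
      · intro p _ hp; rw [Pi.single_apply, if_neg hp, zero_mul]
      · intro h; exact absurd (Finset.mem_univ _) h
    have hχsingle : χ (Pi.single j 1) = A i j := by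
      rw [hχdef]
      simp only []
      rw [Finset.sum_eq_single j]
      · simp
      · intro q _ hq; rw [Pi.single_apply, if_neg hq, mul_zero]
      · intro h; exact absurd (Finset.mem_univ _) h
    set c := χ (Pi.single i 1) with hcdef
    have hcw : ∀ w, A i j * χ w = ψ w * c := by
      intro w
      have h1 := hprop (Pi.single i 1) w
      rw [hψsingle] at h1
      exact h1
    have hcne : c ≠ 0 := by
      intro h0'
      have h1 := hcw (Pi.single j 1)
      rw [h0', mul_zero, hχsingle] at h1
      exact hij (mul_self_eq_zero.1 h1)
    have hψT : ∀ f : T, ψ (vk f.1) = 0 := by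
      intro f
      have hBff : vk f.1 ⬝ᵥ (A *ᵥ vk f.1) = 0 := by
        rw [← hder f.1]; exact hTd f.1 f.2
      have h1 : ψ (vk f.1) * χ (vk f.1) = 0 := by rw [← hB, hBff, mul_zero]
      have h2 : ψ (vk f.1) * (ψ (vk f.1) * c) = 0 := by
        rw [← hcw]
        calc ψ (vk f.1) * (A i j * χ (vk f.1)) = A i j * (ψ (vk f.1) * χ (vk f.1)) := by ring
          _ = 0 := by rw [h1, mul_zero]
      have h3 : ψ (vk f.1) * ψ (vk f.1) * c = 0 := by rw [mul_assoc]; exact h2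
      rcases mul_eq_zero.1 h3 with h4 | h4
      · exact mul_self_eq_zero.1 h4
      · exact absurd h4 hcne
    have hspan := span_eq_top G v0 k T hT.2
    have hle : Submodule.span k (Set.range fun f : T => vcast G v0 k f.1)
        ≤ LinearMap.ker ψ := by
      refine Submodule.span_le.2 ?_
      rintro x ⟨f, rfl⟩
      exact LinearMap.mem_ker.2 (hψT f)
    have hmem : (Pi.single i 1 : {x : V // x ≠ v0} → k) ∈ LinearMap.ker ψ := by
      apply hle
      rw [hspan]
      exact Submodule.mem_top
    have := LinearMap.mem_ker.1 hmem
    rw [hψsingle] at this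
    exact hij this
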